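/- Let A ∈ ℝ^{n×n}, C ∈ ℝ^{q×n}, F ∈ ℝ^{r×n}, t₁ > 0, and let O be the observability matrix of (C, A). Then the following are equivalent: (i) for every x₀ ∈ ℝ^n, if C·exp(tA)·x₀ = 0 for all t ∈ [0, t₁], then F·x₀ = 0 (i.e., the functional Fx(0) of the autonomic system ẋ = Ax is uniquely determined by the output y = Cx on [0, t₁]); (ii) rank([O; F]) = rank(O). -/

import Mathlib

open Matrix intervalIntegral

/-- Observability matrix of the pair `(C, A)`: the vertical block stack of
`C, C*A, C*A², …, C*A^(n-1)`, indexed so that entry `((k, i), j)` is `(C * A^k) i j`. -/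
noncomputable def obsMat {n q : ℕ} (C : Matrix (Fin q) (Fin n) ℝ)
    (A : Matrix (Fin n) (Fin n) ℝ) : Matrix (Fin n × Fin q) (Fin n) ℝ :=
  fun ki j => (C * A ^ (ki.1 : ℕ)) ki.2 j

/-- Observability Gramian `W(t₁) = ∫₀^{t₁} exp(Aᵀτ) Cᵀ C exp(Aτ) dτ` (entrywise integral). -/
noncomputable def obsGram {n q : ℕ} (A : Matrix (Fin n) (Fin n) ℝ)
    (C : Matrix (Fin q) (Fin n) ℝ) (t₁ : ℝ) : Matrix (Fin n) (Fin n) ℝ :=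
  fun i j => ∫ τ in (0:ℝ)..t₁,
    (NormedSpace.exp (τ • Aᵀ) * Cᵀ * C * NormedSpace.exp (τ • A)) i j

section Aux

open Matrix NormedSpace
open scoped Nat

attribute [local instance] Matrix.linftyOpNormedAddCommGroup Matrix.linftyOpNormedSpace
  Matrix.linftyOpNormedRing Matrix.linftyOpNormedAlgebra

variable {n p : ℕ}

noncomputable def mulApplyCLM (M : Matrix (Fin p) (Fin n) ℝ) (x : Fin n → ℝ) :
    Matrix (Fin n) (Fin n) ℝ →L[ℝ] (Fin p → ℝ) :=
  LinearMap.toContinuousLinearMap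
  { toFun := fun E => (M * E).mulVec x
    map_add' := fun E E' => by change (M * (E + E')) *ᵥ x = _; rw [Matrix.mul_add, add_mulVec]
    map_smul' := fun c E => by simp [mul_smul_comm, smul_mulVec] }

@[simp] lemma mulApplyCLM_apply (M : Matrix (Fin p) (Fin n) ℝ) (x : Fin n → ℝ)
    (E : Matrix (Fin n) (Fin n) ℝ) : mulApplyCLM M x E = (M * E).mulVec x := rfl

lemma mul_exp_mulVec (A : Matrix (Fin n) (Fin n) ℝ) (M : Matrix (Fin p) (Fin n) ℝ)
    (x : Fin n → ℝ) (t : ℝ) :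
    (M * exp (t • A)).mulVec x
      = ∑' k : ℕ, ((k ! : ℝ)⁻¹ * t ^ k) • (M * A ^ k).mulVec x := by
  have hs : Summable fun k : ℕ => ((k ! : ℝ)⁻¹) • (t • A) ^ k :=
    expSeries_summable' (𝕂 := ℝ) (t • A)
  have h1 : exp (t • A) = ∑' k : ℕ, ((k ! : ℝ)⁻¹) • (t • A) ^ k := by
    rw [exp_eq_tsum (𝕂 := ℝ)]
  rw [h1, show (M * ∑' k : ℕ, ((k ! : ℝ)⁻¹) • (t • A) ^ k).mulVec x
      = mulApplyCLM M x (∑' k : ℕ, ((k ! : ℝ)⁻¹) • (t • A) ^ k) from rfl,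
    (mulApplyCLM M x).map_tsum hs]
  refine tsum_congr fun k => ?_
  rw [_root_.map_smul, mulApplyCLM_apply, smul_pow, Matrix.mul_smul, smul_mulVec, smul_smul]

lemma hasDerivAt_mul_exp_mulVec (A : Matrix (Fin n) (Fin n) ℝ) (M : Matrix (Fin p) (Fin n) ℝ)
    (x : Fin n → ℝ) (t : ℝ) :
    HasDerivAt (fun u : ℝ => (M * exp (u • A)).mulVec x)
      ((M * A * exp (t • A)).mulVec x) t := by
  have h := hasDerivAt_exp_smul_const' (𝕂 := ℝ) A t
  have h2 := (mulApplyCLM M x).hasFDerivAt.comp_hasDerivAt t h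
  simp only [Function.comp_def, mulApplyCLM_apply] at h2
  rw [Matrix.mul_assoc]
  exact h2

/-- If all `C A^k x = 0` then `(M := C A^j)` variants of `C exp(tA) x` vanish. -/
lemma mul_exp_mulVec_eq_zero {A : Matrix (Fin n) (Fin n) ℝ} {M : Matrix (Fin p) (Fin n) ℝ}
    {x : Fin n → ℝ} (h : ∀ k : ℕ, (M * A ^ k).mulVec x = 0) (t : ℝ) :
    (M * exp (t • A)).mulVec x = 0 := by
  rw [mul_exp_mulVec]
  simp [h]

lemma powers_eq_zero_of_exp_eq_zero {A : Matrix (Fin n) (Fin n) ℝ} {C : Matrix (Fin p) (Fin n) ℝ}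
    {x : Fin n → ℝ} {t₁ : ℝ} (ht₁ : 0 < t₁)
    (h : ∀ t ∈ Set.Icc (0:ℝ) t₁, (C * exp (t • A)).mulVec x = 0) :
    ∀ k : ℕ, (C * A ^ k).mulVec x = 0 := by
  have key : ∀ k : ℕ, ∀ t ∈ Set.Ioo (0:ℝ) t₁, (C * A ^ k * exp (t • A)).mulVec x = 0 := by
    intro k
    induction k with
    | zero => intro t ht; simpa using h t (Set.Ioo_subset_Icc_self ht)
    | succ k ih =>
      intro t ht
      have hzero : (fun u : ℝ => (C * A ^ k * exp (u • A)).mulVec x)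
          =ᶠ[nhds t] fun _ => (0 : Fin p → ℝ) := by
        filter_upwards [isOpen_Ioo.mem_nhds ht] with u hu using ih u hu
      have h1 := hasDerivAt_mul_exp_mulVec A (C * A ^ k) x t
      have h2 : HasDerivAt (fun u : ℝ => (C * A ^ k * exp (u • A)).mulVec x)
          (0 : Fin p → ℝ) t :=
        (hasDerivAt_const t (0 : Fin p → ℝ)).congr_of_eventuallyEq hzero
      have h3 := h1.unique h2
      rw [pow_succ, ← Matrix.mul_assoc]
      exact h3
  set s := t₁ / 2 with hs_def
  have hs : s ∈ Set.Ioo (0:ℝ) t₁ := ⟨by positivity, by rw [hs_def]; linarith⟩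
  set y := (exp (s • A)).mulVec x with hy_def
  have hy : ∀ k : ℕ, (C * A ^ k).mulVec y = 0 := by
    intro k
    have h4 := key k s hs
    rwa [← mulVec_mulVec] at h4
  have hx : x = (exp ((-s) • A)).mulVec y := by
    erw [hy_def, mulVec_mulVec, ← exp_add_of_commute
      (((Commute.refl A).smul_left (-s)).smul_right s)]
    simp
  intro k
  rw [hx, mulVec_mulVec, mul_exp_mulVec]
  have : ∀ m : ℕ, (C * A ^ k * A ^ m).mulVec y = 0 := by
    intro m
    rw [Matrix.mul_assoc, ← pow_add]
    exact hy (k + m)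
  simp [this]

lemma sum_mulVec' {ι : Type*} (s : Finset ι) (f : ι → Matrix (Fin p) (Fin n) ℝ)
    (x : Fin n → ℝ) : (∑ i ∈ s, f i).mulVec x = ∑ i ∈ s, (f i).mulVec x := by
  induction s using Finset.cons_induction with
  | empty => simp [Matrix.zero_mulVec]
  | cons a s ha ih => simp [Finset.sum_cons, add_mulVec, ih]

lemma powers_eq_zero_of_lt {A : Matrix (Fin n) (Fin n) ℝ} {C : Matrix (Fin p) (Fin n) ℝ}
    {x : Fin n → ℝ} (h : ∀ k : ℕ, k < n → (C * A ^ k).mulVec x = 0) :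
    ∀ k : ℕ, (C * A ^ k).mulVec x = 0 := by
  have hc : A.charpoly.coeff n = 1 := by
    have := A.charpoly_monic.coeff_natDegree
    rwa [Matrix.charpoly_natDegree_eq_dim, Fintype.card_fin] at this
  have hCH : A ^ n = -∑ i ∈ Finset.range n, A.charpoly.coeff i • A ^ i := by
    have h0 := A.aeval_self_charpoly
    rw [Polynomial.aeval_eq_sum_range, Matrix.charpoly_natDegree_eq_dim,
      Fintype.card_fin, Finset.sum_range_succ, hc, one_smul] at h0
    rw [eq_neg_iff_add_eq_zero, add_comm]
    exact h0
  intro m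
  induction m using Nat.strong_induction_on with
  | _ m ih =>
    rcases lt_or_ge m n with hm | hm
    · exact h m hm
    · have hmn : m - n + n = m := Nat.sub_add_cancel hm
      calc (C * A ^ m).mulVec x
          = (C * (A ^ (m - n) * A ^ n)).mulVec x := by rw [← pow_add, hmn]
        _ = 0 := by
            rw [hCH]
            have heq : C * (A ^ (m - n) * -∑ i ∈ Finset.range n, A.charpoly.coeff i • A ^ i)
                = -∑ i ∈ Finset.range n, A.charpoly.coeff i • (C * A ^ (m - n + i)) := by
              rw [Matrix.mul_neg, Matrix.mul_neg, Matrix.mul_sum, Matrix.mul_sum]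
              congr 1
              refine Finset.sum_congr rfl fun i _ => ?_
              rw [Matrix.mul_smul, Matrix.mul_smul, pow_add]
            rw [heq, neg_mulVec, sum_mulVec']
            have hterm : ∀ i ∈ Finset.range n,
                (A.charpoly.coeff i • (C * A ^ (m - n + i))).mulVec x = 0 := by
              intro i hi
              have hi' := Finset.mem_range.mp hi
              rw [smul_mulVec, ih (m - n + i) (by omega), smul_zero]
            rw [Finset.sum_congr rfl hterm]
            simp


lemma obsMat_mulVec_eq_zero_iff {n q : ℕ} (C : Matrix (Fin q) (Fin n) ℝ)
    (A : Matrix (Fin n) (Fin n) ℝ) (x : Fin n → ℝ) :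
    (obsMat C A).mulVec x = 0 ↔ ∀ k : Fin n, (C * A ^ (k : ℕ)).mulVec x = 0 := by
  constructor
  · intro h k
    funext i
    have h2 := congrFun h (k, i)
    simpa [obsMat, Matrix.mulVec, dotProduct] using h2
  · intro h
    funext ki
    have h2 := congrFun (h ki.1) ki.2
    simpa [obsMat, Matrix.mulVec, dotProduct] using h2

lemma rank_fromRows_eq_iff {m₁ m₂ nn : Type*} [Fintype m₁] [Fintype m₂] [Fintype nn]
    (O : Matrix m₁ nn ℝ) (F : Matrix m₂ nn ℝ) :
    (Matrix.fromRows O F).rank = O.rank ↔ ∀ x, O.mulVec x = 0 → F.mulVec x = 0 := by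
  classical
  have hker : LinearMap.ker (Matrix.fromRows O F).mulVecLin
      = LinearMap.ker O.mulVecLin ⊓ LinearMap.ker F.mulVecLin := by
    ext x
    simp [LinearMap.mem_ker, Matrix.mulVecLin_apply, Matrix.fromRows_mulVec,
      funext_iff, Sum.forall, forall_and]
  have hle : LinearMap.ker (Matrix.fromRows O F).mulVecLin
      ≤ LinearMap.ker O.mulVecLin := hker ▸ inf_le_left
  have h1 := LinearMap.finrank_range_add_finrank_ker (Matrix.fromRows O F).mulVecLin
  have h2 := LinearMap.finrank_range_add_finrank_ker O.mulVecLin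
  have hr1 : (Matrix.fromRows O F).rank
      = Module.finrank ℝ (LinearMap.range (Matrix.fromRows O F).mulVecLin) := rfl
  have hr2 : O.rank = Module.finrank ℝ (LinearMap.range O.mulVecLin) := rfl
  constructor
  · intro hrank x hx
    have hfr : Module.finrank ℝ (LinearMap.ker (Matrix.fromRows O F).mulVecLin)
        = Module.finrank ℝ (LinearMap.ker O.mulVecLin) := by omega
    have heq := Submodule.eq_of_le_of_finrank_eq hle hfr
    rw [hker] at heq
    have hsub : LinearMap.ker O.mulVecLin ≤ LinearMap.ker F.mulVecLin :=
      inf_eq_left.mp heq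
    have := hsub (show x ∈ LinearMap.ker O.mulVecLin from hx)
    exact this
  · intro h
    have heq : LinearMap.ker (Matrix.fromRows O F).mulVecLin
        = LinearMap.ker O.mulVecLin := by
      rw [hker]
      exact inf_eq_left.mpr fun x hx => h x hx
    rw [heq] at h1
    omega


end Aux

/-- The functional `F x(0)` of the autonomous system `ẋ = Ax`, `y = Cx` is uniquely
determined by the output on `[0, t₁]` (i.e. `C exp(tA) x₀ = 0` on `[0, t₁]` forces
`F x₀ = 0`) if and only if `rank([O; F]) = rank(O)`. -/
theorem functional_observability_iff_rank {n q r : ℕ}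
    (A : Matrix (Fin n) (Fin n) ℝ) (C : Matrix (Fin q) (Fin n) ℝ)
    (F : Matrix (Fin r) (Fin n) ℝ) (t₁ : ℝ) (ht₁ : 0 < t₁) :
    (∀ x₀ : Fin n → ℝ,
        (∀ t ∈ Set.Icc (0:ℝ) t₁,
          C.mulVec ((NormedSpace.exp (t • A)).mulVec x₀) = 0) →
        F.mulVec x₀ = 0) ↔
      (Matrix.fromRows (obsMat C A) F).rank = (obsMat C A).rank := by
  have hO : ∀ x : Fin n → ℝ, (obsMat C A).mulVec x = 0 ↔
      (∀ t ∈ Set.Icc (0:ℝ) t₁, C.mulVec ((NormedSpace.exp (t • A)).mulVec x) = 0) := by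
    intro x
    rw [obsMat_mulVec_eq_zero_iff]
    constructor
    · intro h t ht
      rw [mulVec_mulVec]
      exact mul_exp_mulVec_eq_zero
        (powers_eq_zero_of_lt (fun k hk => h ⟨k, hk⟩)) t
    · intro h k
      exact powers_eq_zero_of_exp_eq_zero ht₁
        (fun t ht => by rw [← mulVec_mulVec]; exact h t ht) (k : ℕ)
  rw [rank_fromRows_eq_iff]
  constructor
  · intro h x hx
    exact h x ((hO x).mp hx)
  · intro h x hx
    exact h x ((hO x).mpr hx)
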